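/- For the GAN generator f(x) = x·log x − (x+1)·log(x+1), the maximizer T of E_p[log σ'] form yields: for fixed densities p, q, the function T(x) = p(x)/(p(x)+q(x)) uniquely maximizes E_p[log T(x)] + E_q[log(1 − T(x))] over measurable T : X → (0,1). -/

import Mathlib

open MeasureTheory

lemma gan_key {p q t : ℝ} (hp : 0 ≤ p) (hq : 0 ≤ q) (hs : 0 < p + q)
    (ht0 : 0 < t) (ht1 : t < 1) :
    Real.log t * p + Real.log (1 - t) * q ≤
      Real.log (p / (p + q)) * p + Real.log (1 - p / (p + q)) * q ∧
    (Real.log t * p + Real.log (1 - t) * q =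
      Real.log (p / (p + q)) * p + Real.log (1 - p / (p + q)) * q → t = p / (p + q)) := by
  rcases hp.eq_or_lt with hp0 | hp0
  · -- p = 0
    have hq0 : 0 < q := by linarith [hs]
    have hneg : Real.log (1 - t) < 0 := Real.log_neg (by linarith) (by linarith)
    have hlt : Real.log t * p + Real.log (1 - t) * q <
        Real.log (p / (p + q)) * p + Real.log (1 - p / (p + q)) * q := by
      rw [← hp0]; simp; nlinarith
    exact ⟨hlt.le, fun h => absurd h hlt.ne⟩
  rcases hq.eq_or_lt with hq0 | hq0
  · -- q = 0
    have hneg : Real.log t < 0 := Real.log_neg ht0 ht1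
    have hlt : Real.log t * p + Real.log (1 - t) * q <
        Real.log (p / (p + q)) * p + Real.log (1 - p / (p + q)) * q := by
      rw [← hq0]
      have : p / (p + 0) = 1 := by field_simp; ring
      simp [this, div_self hp0.ne']
      nlinarith
    exact ⟨hlt.le, fun h => absurd h hlt.ne⟩
  · -- main case
    have hsne : (p + q) ≠ 0 := hs.ne'
    have ha0 : 0 < p / (p + q) := div_pos hp0 hs
    have ha1 : p / (p + q) < 1 := (div_lt_one hs).2 (by linarith)
    set a := p / (p + q) with hadef
    have h1a : 1 - a = q / (p + q) := by rw [hadef]; field_simp; ring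
    have key1 : Real.log (t / a) ≤ t / a - 1 :=
      Real.log_le_sub_one_of_pos (div_pos ht0 ha0)
    have key2 : Real.log ((1 - t) / (1 - a)) ≤ (1 - t) / (1 - a) - 1 :=
      Real.log_le_sub_one_of_pos (div_pos (by linarith) (by linarith))
    have e1 : Real.log (t / a) = Real.log t - Real.log a := Real.log_div ht0.ne' ha0.ne'
    have e2 : Real.log ((1 - t) / (1 - a)) = Real.log (1 - t) - Real.log (1 - a) :=
      Real.log_div (by linarith) (by linarith)
    have sum0 : p * (t / a - 1) + q * ((1 - t) / (1 - a) - 1) = 0 := by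
      rw [hadef, h1a]; field_simp; ring
    have k1 : p * (Real.log t - Real.log a) ≤ p * (t / a - 1) := by
      rw [← e1]; exact mul_le_mul_of_nonneg_left key1 hp
    have k2 : q * (Real.log (1 - t) - Real.log (1 - a)) ≤ q * ((1 - t) / (1 - a) - 1) := by
      rw [← e2]; exact mul_le_mul_of_nonneg_left key2 hq
    constructor
    · nlinarith [k1, k2, sum0]
    · intro h
      by_contra hne
      have hta : t / a ≠ 1 := fun h1 => hne (by
        field_simp at h1; exact h1)
      have s1 : Real.log (t / a) < t / a - 1 :=
        Real.log_lt_sub_one_of_pos (div_pos ht0 ha0) hta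
      have k1' : p * (Real.log t - Real.log a) < p * (t / a - 1) := by
        rw [← e1]; exact mul_lt_mul_of_pos_left s1 hp0
      nlinarith [k1', k2, sum0]

/-- Original GAN optimal discriminator: `T*(x) = p(x)/(p(x)+q(x))` uniquely
maximizes `E_p[log T] + E_q[log (1 − T)]` over measurable `T : X → (0,1)`. -/
theorem gan_optimal_discriminator {X : Type*} [MeasurableSpace X]
    (μ : Measure X) [SigmaFinite μ]
    (p q : X → ℝ)
    (hp : Measurable p) (hq : Measurable q)
    (hp0 : ∀ᵐ x ∂μ, 0 ≤ p x) (hq0 : ∀ᵐ x ∂μ, 0 ≤ q x)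
    (hpq : ∀ᵐ x ∂μ, 0 < p x + q x)
    (hpint : ∫ x, p x ∂μ = 1) (hqint : ∫ x, q x ∂μ = 1)
    (hoptint1 : Integrable (fun x => Real.log (p x / (p x + q x)) * p x) μ)
    (hoptint2 : Integrable (fun x => Real.log (1 - p x / (p x + q x)) * q x) μ) :
    ∀ T : X → ℝ, Measurable T → (∀ x, T x ∈ Set.Ioo (0:ℝ) 1) →
      Integrable (fun x => Real.log (T x) * p x) μ →
      Integrable (fun x => Real.log (1 - T x) * q x) μ →
      ((∫ x, Real.log (T x) * p x ∂μ) + ∫ x, Real.log (1 - T x) * q x ∂μ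
        ≤ (∫ x, Real.log (p x / (p x + q x)) * p x ∂μ)
          + ∫ x, Real.log (1 - p x / (p x + q x)) * q x ∂μ)
      ∧ (((∫ x, Real.log (T x) * p x ∂μ) + ∫ x, Real.log (1 - T x) * q x ∂μ
          = (∫ x, Real.log (p x / (p x + q x)) * p x ∂μ)
            + ∫ x, Real.log (1 - p x / (p x + q x)) * q x ∂μ) →
        ∀ᵐ x ∂μ, T x = p x / (p x + q x)) := by
  intro T hT hT01 hTint1 hTint2
  set g : X → ℝ := fun x =>
    (Real.log (p x / (p x + q x)) * p x + Real.log (1 - p x / (p x + q x)) * q x)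
      - (Real.log (T x) * p x + Real.log (1 - T x) * q x) with hgdef
  have hgint : Integrable g μ :=
    ((hoptint1.add hoptint2).sub (hTint1.add hTint2))
  have hg0 : 0 ≤ᵐ[μ] g := by
    filter_upwards [hp0, hq0, hpq] with x hpx hqx hsx
    have := (gan_key hpx hqx hsx (hT01 x).1 (hT01 x).2).1
    simp only [hgdef, Pi.zero_apply]
    linarith
  have hgeq : ∫ x, g x ∂μ =
      ((∫ x, Real.log (p x / (p x + q x)) * p x ∂μ)
        + ∫ x, Real.log (1 - p x / (p x + q x)) * q x ∂μ)
      - ((∫ x, Real.log (T x) * p x ∂μ) + ∫ x, Real.log (1 - T x) * q x ∂μ) := by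
    have hI1 : Integrable (fun x => Real.log (p x / (p x + q x)) * p x
        + Real.log (1 - p x / (p x + q x)) * q x) μ := hoptint1.add hoptint2
    have hI2 : Integrable (fun x => Real.log (T x) * p x
        + Real.log (1 - T x) * q x) μ := hTint1.add hTint2
    simp only [hgdef]
    rw [integral_sub hI1 hI2, integral_add hoptint1 hoptint2, integral_add hTint1 hTint2]
  have hnonneg : 0 ≤ ∫ x, g x ∂μ := integral_nonneg_of_ae hg0
  constructor
  · linarith [hnonneg, hgeq.ge, hgeq.le]
  · intro h
    have hz : ∫ x, g x ∂μ = 0 := by rw [hgeq]; linarith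
    have := (integral_eq_zero_iff_of_nonneg_ae hg0 hgint).1 hz
    filter_upwards [hp0, hq0, hpq, this] with x hpx hqx hsx hgx
    have hkey := (gan_key hpx hqx hsx (hT01 x).1 (hT01 x).2).2
    apply hkey
    simp only [hgdef] at hgx
    have : g x = 0 := hgx
    simp only [hgdef] at this
    linarith
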